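/- Let Δ ⊂ ℝ^N be the open convex hull of N+1 (or more generally finitely many) unit vectors v₁,…,v_N whose convex hull contains the origin in its interior. Then for all sufficiently small t > 0 there exists c > 0 such that closure(Δ) ⊆ ∪ᵢ₌₁^N (Δ + t vᵢ)_c, where U_c := {x ∈ U : dist(x, ∂U) > c}. Moreover this covering is invariant under homothety: for every r > 0, closure(rΔ) ⊆ ∪ᵢ (rΔ + tr vᵢ)_{cr}. -/

import Mathlib

open scoped Pointwise

noncomputable section

abbrev Euc (d : ℕ) := EuclideanSpace ℝ (Fin d)

/-- `shrinkSet U c = U_c := {x ∈ U : dist(x, ∂U) > c}`. -/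
def shrinkSet {N : ℕ} (U : Set (Euc N)) (c : ℝ) : Set (Euc N) :=
  {x ∈ U | c < Metric.infDist x (frontier U)}

/-- Let `Δ` be the open convex hull of finitely many unit vectors
`v₁,…,v_m ⊂ ℝ^N` containing the origin in its interior. Then for all sufficiently small
`t > 0` there exists `c > 0` with `closure Δ ⊆ ⋃ᵢ (Δ + t vᵢ)_c`, and by invariance under
homothety, `closure (rΔ) ⊆ ⋃ᵢ (rΔ + tr vᵢ)_{cr}` for every `r > 0`. -/
theorem stmt14 (N m : ℕ) (v : Fin m → Euc N) (hunit : ∀ i, ‖v i‖ = 1)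
    (Δ : Set (Euc N)) (hΔ : Δ = interior (convexHull ℝ (Set.range v)))
    (h0 : (0 : Euc N) ∈ Δ) :
    ∃ t₀ : ℝ, 0 < t₀ ∧ ∀ t : ℝ, 0 < t → t < t₀ → ∃ c : ℝ, 0 < c ∧
      closure Δ ⊆ ⋃ i : Fin m, shrinkSet ((fun x => x + t • v i) '' Δ) c ∧
      ∀ r : ℝ, 0 < r →
        closure (r • Δ) ⊆
          ⋃ i : Fin m, shrinkSet ((fun x => x + (t * r) • v i) '' (r • Δ)) (c * r) := by
  classical
  subst hΔ
  set K := convexHull ℝ (Set.range v) with hKdef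
  have hKconv : Convex ℝ K := convex_convexHull ℝ _
  have hKcomp : IsCompact K := (Set.finite_range v).isCompact_convexHull ℝ
  have hKclosed : IsClosed K := hKcomp.isClosed
  have hm : 0 < m := by
    rcases Nat.eq_zero_or_pos m with rfl | h
    · exfalso
      have hKe : K = ∅ := by rw [hKdef, Set.range_eq_empty, convexHull_empty]
      rw [hKe, interior_empty] at h0
      exact h0
    · exact h
  have hv0 : v ⟨0, hm⟩ ≠ 0 := fun h => by simpa [h] using hunit ⟨0, hm⟩
  haveI : Nontrivial (Euc N) := nontrivial_of_ne _ _ hv0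
  have hmR : (0:ℝ) < m := by exact_mod_cast hm
  obtain ⟨ε, hε, hball⟩ := Metric.isOpen_iff.1 isOpen_interior 0 h0
  refine ⟨min (1/m) (1/2), by positivity, ?_⟩
  intro t ht htlt
  have ht1 : t < 1/2 := lt_of_lt_of_le htlt (min_le_right _ _)
  have htm : t < 1/m := lt_of_lt_of_le htlt (min_le_left _ _)
  have h1t : (0:ℝ) < 1 - t := by linarith
  -- Step 1: balls of radius t*ε around points of K are inside some translate of K
  have key : ∀ x ∈ K, ∃ i : Fin m,
      Metric.ball x (t * ε) ⊆ (fun y => y + t • v i) '' K := by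
    intro x hx
    rw [hKdef, convexHull_range_eq_exists_affineCombination] at hx
    obtain ⟨s, w, hw0, hw1, hwx⟩ := hx
    set w' : Fin m → ℝ := fun i => if i ∈ s then w i else 0 with hw'def
    have hw'0 : ∀ i, 0 ≤ w' i := by
      intro i; by_cases h : i ∈ s <;> simp [w', h, hw0 i]
    have hw'1 : ∑ i, w' i = 1 := by
      rw [← hw1]
      simp [w', Finset.sum_ite_mem]
    have hx' : ∑ i, w' i • v i = x := by
      rw [← hwx, Finset.affineCombination_eq_linear_combination s v w hw1]
      rw [show (∑ i, w' i • v i) = ∑ i, (if i ∈ s then w i • v i else 0) by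
        refine Finset.sum_congr rfl fun i _ => ?_
        by_cases h : i ∈ s <;> simp [w', h]]
      simp [Finset.sum_ite_mem]
    have hex : ∃ i, 1/m ≤ w' i := by
      by_contra h
      push_neg at h
      have hlt : ∑ i, w' i < ∑ _i : Fin m, (1:ℝ)/m :=
        Finset.sum_lt_sum_of_nonempty (Finset.univ_nonempty_iff.2 ⟨⟨0, hm⟩⟩)
          (fun i _ => h i)
      rw [hw'1, Finset.sum_const, Finset.card_univ, Fintype.card_fin,
        nsmul_eq_mul, mul_one_div, div_self hmR.ne'] at hlt
      exact lt_irrefl 1 hlt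
    obtain ⟨i, hi⟩ := hex
    have hti : t ≤ w' i := le_trans htm.le hi
    refine ⟨i, ?_⟩
    -- the "deep" point p
    set W : Fin m → ℝ := fun j => (1 - t)⁻¹ * (w' j - if j = i then t else 0) with hWdef
    have hW0 : ∀ j, 0 ≤ W j := by
      intro j
      apply mul_nonneg (inv_nonneg.2 h1t.le)
      by_cases h : j = i
      · subst h; simpa using sub_nonneg.2 hti
      · simp [h, hw'0 j]
    have hW1 : ∑ j, W j = 1 := by
      rw [hWdef]
      rw [← Finset.mul_sum, Finset.sum_sub_distrib, hw'1]
      simp only [Finset.sum_ite_eq', Finset.mem_univ, if_true]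
      field_simp
    have hWsum : ∑ j, W j • v j = (1 - t)⁻¹ • (x - t • v i) := by
      rw [hWdef]
      have : ∀ j, ((1 - t)⁻¹ * (w' j - if j = i then t else 0)) • v j
          = (1 - t)⁻¹ • ((w' j • v j) - (if j = i then t • v j else 0)) := by
        intro j
        by_cases h : j = i <;> simp [h, mul_smul, sub_smul, smul_sub]
      simp only [this, ← Finset.smul_sum]
      congr 1
      rw [Finset.sum_sub_distrib, hx']
      simp only [Finset.sum_ite_eq', Finset.mem_univ, if_true]
    have hp : (1 - t)⁻¹ • (x - t • v i) ∈ K := by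
      rw [hKdef, ← hWsum]
      exact mem_convexHull_of_exists_fintype W v hW0 hW1 (fun j => Set.mem_range_self j) rfl
    intro y hy
    have hyK : y - t • v i ∈ K := by
      have hq : t⁻¹ • (y - x) ∈ K := by
        apply interior_subset (s := K)
        apply hball
        rw [Metric.mem_ball, dist_zero_right, norm_smul, norm_inv, Real.norm_of_nonneg ht.le]
        rw [Metric.mem_ball, dist_eq_norm] at hy
        rw [inv_mul_lt_iff₀ ht]
        exact hy
      have := hKconv hp hq (by linarith : (0:ℝ) ≤ 1 - t) ht.le (by ring)
      have heq : (1 - t) • ((1 - t)⁻¹ • (x - t • v i)) + t • (t⁻¹ • (y - x))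
          = y - t • v i := by
        rw [smul_smul, smul_smul, mul_inv_cancel₀ h1t.ne', mul_inv_cancel₀ ht.ne',
          one_smul, one_smul]
        abel
      rwa [heq] at this
    exact ⟨y - t • v i, hyK, by simp⟩
  -- Step 2: membership in shrink sets with quantitative bounds
  have step : ∀ x ∈ K, ∃ i : Fin m,
      x ∈ (fun y => y + t • v i) '' interior K ∧
      (frontier ((fun y => y + t • v i) '' interior K)).Nonempty ∧
      t * ε ≤ Metric.infDist x (frontier ((fun y => y + t • v i) '' interior K)) := by
    intro x hx
    obtain ⟨i, hsub⟩ := key x hx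
    set S : Set (Euc N) := (fun y => y + t • v i) '' interior K with hSdef
    have hint : S = interior ((fun y => y + t • v i) '' K) := by
      rw [hSdef]
      exact (Homeomorph.addRight (t • v i)).image_interior K
    have hSopen : IsOpen S := by rw [hint]; exact isOpen_interior
    have hball2 : Metric.ball x (t * ε) ⊆ S := by
      rw [hint]
      exact interior_maximal hsub Metric.isOpen_ball
    have hxS : x ∈ S := hball2 (Metric.mem_ball_self (by positivity))
    have hSbd : Bornology.IsBounded S := by
      have h1 : IsCompact ((fun y => y + t • v i) '' K) :=
        hKcomp.image (continuous_add_right (t • v i))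
      exact h1.isBounded.subset (hSdef ▸ Set.image_mono interior_subset)
    have hSne_univ : S ≠ Set.univ := by
      intro h
      obtain ⟨R, hR⟩ := hSbd.subset_closedBall 0
      obtain ⟨z, hz⟩ := NormedSpace.exists_lt_norm ℝ (Euc N) R
      have : z ∈ Metric.closedBall 0 R := hR (h ▸ Set.mem_univ z)
      rw [Metric.mem_closedBall, dist_zero_right] at this
      linarith
    have hfr : (frontier S).Nonempty := nonempty_frontier_iff.2 ⟨⟨x, hxS⟩, hSne_univ⟩
    refine ⟨i, hxS, hfr, ?_⟩
    by_contra h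
    push_neg at h
    obtain ⟨z, hzF, hzd⟩ := (Metric.infDist_lt_iff hfr).1 h
    have hzS : z ∈ S := hball2 (Metric.mem_ball'.2 hzd)
    rw [hSopen.frontier_eq] at hzF
    exact hzF.2 hzS
  have htε : 0 < t * ε := by positivity
  refine ⟨t * ε / 2, by positivity, ?_, ?_⟩
  · intro x hx
    obtain ⟨i, h1, _, h3⟩ := step x (closure_minimal interior_subset hKclosed hx)
    exact Set.mem_iUnion.2 ⟨i, h1, by linarith⟩
  · intro r hr
    have hr0 : r ≠ 0 := hr.ne'
    intro x hx
    rw [closure_smul₀] at hx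
    obtain ⟨y, hy, rfl⟩ := hx
    obtain ⟨i, h1, hfrne, h3⟩ := step y (closure_minimal interior_subset hKclosed hy)
    refine Set.mem_iUnion.2 ⟨i, ?_⟩
    set S : Set (Euc N) := (fun y => y + t • v i) '' interior K with hSdef
    have hSS : (fun x => x + (t * r) • v i) '' (r • interior K) = r • S := by
      ext z
      simp only [hSdef, Set.mem_image, Set.mem_smul_set]
      constructor
      · rintro ⟨-, ⟨w, hw, rfl⟩, rfl⟩
        exact ⟨w + t • v i, ⟨w, hw, rfl⟩, by rw [smul_add, smul_smul, mul_comm]⟩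
      · rintro ⟨-, ⟨w, hw, rfl⟩, rfl⟩
        exact ⟨r • w, ⟨w, hw, rfl⟩, by rw [smul_add, smul_smul, mul_comm]⟩
    rw [hSS]
    have hfr' : frontier (r • S) = r • frontier S := by
      rw [frontier, frontier, closure_smul₀' hr0, interior_smul₀ hr0,
        Set.smul_set_sdiff₀ hr0]
    refine ⟨Set.smul_mem_smul_set h1, ?_⟩
    rw [hfr']
    have hne : (r • frontier S).Nonempty := hfrne.smul_set
    have hlb : r * (t * ε) ≤ Metric.infDist (r • y) (r • frontier S) := by
      by_contra h
      push_neg at h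
      obtain ⟨z, hz, hdz⟩ := (Metric.infDist_lt_iff hne).1 h
      obtain ⟨z', hz', rfl⟩ := hz
      rw [dist_smul₀, Real.norm_of_nonneg hr.le] at hdz
      have : t * ε ≤ dist y z' := le_trans h3 (Metric.infDist_le_dist_of_mem hz')
      nlinarith
    calc t * ε / 2 * r < r * (t * ε) := by nlinarith
      _ ≤ _ := hlb
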